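/- Exact fourth moment formula on the unit sphere: Let Z_1, …, Z_n be random variables such that Z_1^2 + ⋯ + Z_n^2 = 1 and, for all positive integers m_1, …, m_r with m_1 + ⋯ + m_r ≤ 4, the mixed moment β_{2m_1,…,2m_r} := E[Z_{i_1}^{2m_1} ⋯ Z_{i_r}^{2m_r}] (for distinct indices) is invariant under permutations of the indices. Then for any real numbers a_1, …, a_n with a_1 + ⋯ + a_n = 1, one has E[(∑_{k=1}^n a_k (n Z_k^2 − 1))^4] = K_{4,4} n^4 β_{4,4} + K_{2,2} n^2 β_{2,2} + K_{2,2,2} n^3 β_{2,2,2} + K_{2,2,2,2} n^4 β_{2,2,2,2} + K, where, with S_j = a_1^j + ⋯ + a_n^j: K_{4,4} = 3S_2^2 − 4S_3 + n S_4; K = 6n S_2 − 4n² S_3 + n³ S_4 − 3; K_{2,2} = −12n S_2 + 8n² S_3 − 2n³ S_4 + 6; K_{2,2,2} = 8n S_2 − 2n S_2^2 + (8n(1−2n)/3) S_3 + (2n²(2n−1)/3) S_4 − 4; K_{2,2,2,2} = −2n S_2 + (2n−3) S_2^2 + (4(n²−2n+3)/3) S_3 − (n(n²−2n+3)/3) S_4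 + 1. In particular, K + K_{4,4} + K_{2,2} + K_{2,2,2} + K_{2,2,2,2} = 0. -/

import Mathlib

open MeasureTheory Filter Finset

noncomputable section

variable {Ω : Type*} [MeasurableSpace Ω]

/-- `mom P Z [m₁, …, m_r]` is the mixed moment `β_{2m₁,…,2m_r} = E[Z_{i₁}^{2m₁} ⋯ Z_{i_r}^{2m_r}]`
computed with the distinct indices `i₁ = 0, …, i_r = r−1`; coordinates of `Z` beyond the list
get exponent `0`.  (Under the permutation-invariance hypothesis the choice of distinct indices
is irrelevant.) -/
def mom {n : ℕ} (P : Measure Ω) (Z : Fin n → Ω → ℝ) (e : List ℕ) : ℝ :=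
  ∫ ω, ∏ i : Fin n, Z i ω ^ (2 * e.getD i.val 0) ∂P

/-- `S_j = a₁^j + ⋯ + a_n^j`. -/
def Spow {n : ℕ} (a : Fin n → ℝ) (j : ℕ) : ℝ := ∑ i, a i ^ j

set_option linter.unusedSectionVars false
set_option linter.unusedVariables false
section

def DD {n : ℕ} (k i : Fin n) : ℕ := if k = i then 1 else 0

/-- real indicator of equality of indices -/
def dd {n : ℕ} (k l : Fin n) : ℝ := if k = l then 1 else 0

def patt {n : ℕ} (e : List ℕ) : Fin n → ℕ := fun i => e.getD i.val 0

def Ifn {n : ℕ} (P : Measure Ω) (Z : Fin n → Ω → ℝ) (m : Fin n → ℕ) : ℝ :=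
  ∫ ω, ∏ i : Fin n, Z i ω ^ (2 * m i) ∂P

lemma perm_extend {n r : ℕ} (f g : Fin r → Fin n) (hf : Function.Injective f)
    (hg : Function.Injective g) : ∃ σ : Equiv.Perm (Fin n), ∀ t, σ (f t) = g t := by
  induction r with
  | zero => exact ⟨1, fun t => t.elim0⟩
  | succ r ih =>
    obtain ⟨σ', hσ'⟩ := ih (f ∘ Fin.succ) (g ∘ Fin.succ)
      (hf.comp (Fin.succ_injective r)) (hg.comp (Fin.succ_injective r))
    refine ⟨σ'.trans (Equiv.swap (σ' (f 0)) (g 0)), ?_⟩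
    intro t
    rcases Fin.eq_zero_or_eq_succ t with rfl | ⟨s, rfl⟩
    · simp [Equiv.swap_apply_left]
    · have h1 : σ' (f s.succ) = g s.succ := hσ' s
      have h2 : g s.succ ≠ g 0 := fun h => (Fin.succ_ne_zero s) (hg h)
      have h3 : g s.succ ≠ σ' (f 0) := by
        intro h
        have : f s.succ = f 0 := σ'.injective (by rw [h1, h])
        exact (Fin.succ_ne_zero s) (hf this)
      simp only [Equiv.trans_apply, h1]
      rw [Equiv.swap_apply_of_ne_of_ne h3 h2]

lemma inj2 {α} (k l : α) (h1 : k ≠ l) : Function.Injective ![k, l] := by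
  intro s t hst
  fin_cases s <;> fin_cases t <;> first | rfl | (exfalso; simp_all)

lemma inj3 {α} (k l m : α) (h1 : k ≠ l) (h2 : k ≠ m) (h3 : l ≠ m) :
    Function.Injective ![k, l, m] := by
  intro s t hst
  fin_cases s <;> fin_cases t <;> first | rfl | (exfalso; simp_all)

lemma inj4 {α} (k l m p : α) (h1 : k ≠ l) (h2 : k ≠ m) (h3 : k ≠ p) (h4 : l ≠ m)
    (h5 : l ≠ p) (h6 : m ≠ p) : Function.Injective ![k, l, m, p] := by
  intro s t hst
  fin_cases s <;> fin_cases t <;> first | rfl | (exfalso; simp_all)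

lemma patt_castLE {n r : ℕ} (hrn : r ≤ n) (e : List ℕ) (he : e.length ≤ r) (i : Fin n) :
    patt e i = ∑ t : Fin r, if Fin.castLE hrn t = i then e.getD t.val 0 else 0 := by
  by_cases h : i.val < r
  · rw [Finset.sum_eq_single_of_mem (⟨i.val, h⟩ : Fin r) (Finset.mem_univ _)]
    · rw [if_pos (by apply Fin.ext; simp)]
      rfl
    · intro t _ ht
      rw [if_neg]
      intro hc
      apply ht
      apply Fin.ext
      have := congrArg Fin.val hc
      simpa using this
  · rw [Finset.sum_eq_zero, patt, List.getD_eq_default]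
    · omega
    · intro t _
      rw [if_neg]
      intro hc
      have := congrArg Fin.val hc
      simp at this
      omega

lemma sum_ite1 {n : ℕ} (j0 : Fin n) (F : Fin n → ℝ) (x z : ℝ)
    (hF : ∀ j, F j = if j = j0 then x else z) :
    ∑ j, F j = x + ((n : ℝ) - 1) * z := by
  have : ∀ j, F j = z + (if j = j0 then x - z else 0) := by
    intro j
    rw [hF j]
    by_cases h : j = j0 <;> simp [h]
  rw [Finset.sum_congr rfl (fun j _ => this j), Finset.sum_add_distrib,
    Finset.sum_ite_eq' Finset.univ j0 (fun _ => x - z)]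
  simp [Finset.card_univ, mul_comm]
  ring

lemma sum_ite2 {n : ℕ} (j0 j1 : Fin n) (h01 : j0 ≠ j1) (F : Fin n → ℝ) (x y z : ℝ)
    (hF : ∀ j, F j = if j = j0 then x else if j = j1 then y else z) :
    ∑ j, F j = x + y + ((n : ℝ) - 2) * z := by
  have : ∀ j, F j = z + ((if j = j0 then x - z else 0) + (if j = j1 then y - z else 0)) := by
    intro j
    rw [hF j]
    by_cases h : j = j0
    · subst h; simp [h01]
    · by_cases h' : j = j1 <;> simp [h, h', Ne.symm h01]
  rw [Finset.sum_congr rfl (fun j _ => this j), Finset.sum_add_distrib,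
    Finset.sum_add_distrib, Finset.sum_ite_eq' Finset.univ j0 (fun _ => x - z),
    Finset.sum_ite_eq' Finset.univ j1 (fun _ => y - z)]
  simp [Finset.card_univ, mul_comm]
  ring

lemma sum_ite3 {n : ℕ} (j0 j1 j2 : Fin n) (h01 : j0 ≠ j1) (h02 : j0 ≠ j2) (h12 : j1 ≠ j2)
    (F : Fin n → ℝ) (x y w z : ℝ)
    (hF : ∀ j, F j = if j = j0 then x else if j = j1 then y else if j = j2 then w else z) :
    ∑ j, F j = x + y + w + ((n : ℝ) - 3) * z := by
  have : ∀ j, F j = z + ((if j = j0 then x - z else 0) + (if j = j1 then y - z else 0)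
      + (if j = j2 then w - z else 0)) := by
    intro j
    rw [hF j]
    by_cases h : j = j0
    · subst h; simp [h01, h02]
    · by_cases h' : j = j1
      · subst h'; simp [h, h12]
      · by_cases h'' : j = j2 <;> simp [h, h', h'', Ne.symm h02, Ne.symm h12]
  rw [Finset.sum_congr rfl (fun j _ => this j), Finset.sum_add_distrib,
    Finset.sum_add_distrib, Finset.sum_add_distrib,
    Finset.sum_ite_eq' Finset.univ j0 (fun _ => x - z),
    Finset.sum_ite_eq' Finset.univ j1 (fun _ => y - z),
    Finset.sum_ite_eq' Finset.univ j2 (fun _ => w - z)]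
  simp [Finset.card_univ, mul_comm]
  ring

lemma prodsum2 {n : ℕ} (u v : Fin n → ℝ) :
    ∑ x, ∑ y, u x * v y = (∑ x, u x) * (∑ y, v y) := by
  rw [Finset.sum_mul_sum]

lemma prodsum3 {n : ℕ} (u v w : Fin n → ℝ) :
    ∑ x, ∑ y, ∑ z, u x * v y * w z = (∑ x, u x) * (∑ y, v y) * (∑ z, w z) := by
  calc ∑ x, ∑ y, ∑ z, u x * v y * w z
      = ∑ x, (∑ y, u x * v y) * (∑ z, w z) :=
        Finset.sum_congr rfl fun x _ => prodsum2 _ _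
    _ = ∑ x, u x * ((∑ y, v y) * (∑ z, w z)) := by
        refine Finset.sum_congr rfl fun x _ => ?_
        rw [← Finset.mul_sum, mul_assoc]
    _ = (∑ x, u x) * ((∑ y, v y) * (∑ z, w z)) := by rw [← Finset.sum_mul]
    _ = (∑ x, u x) * (∑ y, v y) * (∑ z, w z) := by ring

lemma prodsum4 {n : ℕ} (u v w t : Fin n → ℝ) :
    ∑ x, ∑ y, ∑ z, ∑ q, u x * v y * w z * t q
      = (∑ x, u x) * (∑ y, v y) * (∑ z, w z) * (∑ q, t q) := by
  calc ∑ x, ∑ y, ∑ z, ∑ q, u x * v y * w z * t q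
      = ∑ x, (∑ y, u x * v y) * (∑ z, w z) * (∑ q, t q) :=
        Finset.sum_congr rfl fun x _ => prodsum3 _ _ _
    _ = ∑ x, u x * ((∑ y, v y) * (∑ z, w z) * (∑ q, t q)) := by
        refine Finset.sum_congr rfl fun x _ => ?_
        rw [← Finset.mul_sum]
        ring
    _ = (∑ x, u x) * ((∑ y, v y) * (∑ z, w z) * (∑ q, t q)) := by rw [← Finset.sum_mul]
    _ = (∑ x, u x) * (∑ y, v y) * (∑ z, w z) * (∑ q, t q) := by ring

lemma sum_pow_four {n : ℕ} (v : Fin n → ℝ) :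
    (∑ k, v k) ^ 4 = ∑ k, ∑ l, ∑ m, ∑ p, v k * v l * v m * v p := by
  rw [prodsum4 v v v v]
  ring

lemma sum_pow_three {n : ℕ} (v : Fin n → ℝ) :
    (∑ k, v k) ^ 3 = ∑ k, ∑ l, ∑ m, v k * v l * v m := by
  rw [prodsum3 v v v]
  ring

lemma sum_pow_two' {n : ℕ} (v : Fin n → ℝ) :
    (∑ k, v k) ^ 2 = ∑ k, ∑ l, v k * v l := by
  rw [prodsum2 v v]
  ring

section MONO
variable {n : ℕ} (a : Fin n → ℝ) (ha : ∑ i, a i = 1)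

include ha in
lemma w4_0 : ∑ k, ∑ l, ∑ m, ∑ p : Fin n, a k * a l * a m * a p = 1 := by
  rw [← sum_pow_four, ha, one_pow]

include ha in
lemma w4_kl : ∑ k, ∑ l, ∑ m, ∑ p : Fin n, a k * a l * a m * a p * dd k l
    = ∑ i, a i * a i := by
  simp [dd, mul_ite, ite_mul, mul_one, mul_zero, zero_mul, Finset.sum_ite_eq,
    ← Finset.mul_sum, ← Finset.sum_mul, ha]

include ha in
lemma w4_km : ∑ k, ∑ l, ∑ m, ∑ p : Fin n, a k * a l * a m * a p * dd k m
    = ∑ i, a i * a i := by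
  simp [dd, mul_ite, ite_mul, mul_one, mul_zero, zero_mul, Finset.sum_ite_eq,
    ← Finset.mul_sum, ← Finset.sum_mul, ha]

include ha in
lemma w4_kp : ∑ k, ∑ l, ∑ m, ∑ p : Fin n, a k * a l * a m * a p * dd k p
    = ∑ i, a i * a i := by
  simp [dd, mul_ite, ite_mul, mul_one, mul_zero, zero_mul, Finset.sum_ite_eq,
    ← Finset.mul_sum, ← Finset.sum_mul, ha]

include ha in
lemma w4_lm : ∑ k, ∑ l, ∑ m, ∑ p : Fin n, a k * a l * a m * a p * dd l m
    = ∑ i, a i * a i := by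
  simp [dd, mul_ite, ite_mul, mul_one, mul_zero, zero_mul, Finset.sum_ite_eq,
    ← Finset.mul_sum, ← Finset.sum_mul, ha]
  calc ∑ x : Fin n, ∑ y : Fin n, a x * a y * a y
      = (∑ x, a x) * (∑ y, a y * a y) := by
        rw [← prodsum2]
        exact Finset.sum_congr rfl fun x _ => Finset.sum_congr rfl fun y _ => by ring
    _ = ∑ i, a i * a i := by rw [ha, one_mul]

include ha in
lemma w4_lp : ∑ k, ∑ l, ∑ m, ∑ p : Fin n, a k * a l * a m * a p * dd l p
    = ∑ i, a i * a i := by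
  simp [dd, mul_ite, ite_mul, mul_one, mul_zero, zero_mul, Finset.sum_ite_eq,
    ← Finset.mul_sum, ← Finset.sum_mul, ha]
  calc ∑ x : Fin n, ∑ y : Fin n, a x * a y * a y
      = (∑ x, a x) * (∑ y, a y * a y) := by
        rw [← prodsum2]
        exact Finset.sum_congr rfl fun x _ => Finset.sum_congr rfl fun y _ => by ring
    _ = ∑ i, a i * a i := by rw [ha, one_mul]

include ha in
lemma w4_mp : ∑ k, ∑ l, ∑ m, ∑ p : Fin n, a k * a l * a m * a p * dd m p
    = ∑ i, a i * a i := by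
  simp [dd, mul_ite, ite_mul, mul_one, mul_zero, zero_mul, Finset.sum_ite_eq,
    ← Finset.mul_sum, ← Finset.sum_mul, ha]
  calc ∑ x : Fin n, ∑ y : Fin n, ∑ z : Fin n, a x * a y * a z * a z
      = (∑ x, a x) * (∑ y, a y) * (∑ z, a z * a z) := by
        rw [← prodsum3]
        exact Finset.sum_congr rfl fun x _ => Finset.sum_congr rfl fun y _ =>
          Finset.sum_congr rfl fun z _ => by ring
    _ = ∑ i, a i * a i := by rw [ha, one_mul, one_mul]

include ha in
lemma w4_klmp : ∑ k, ∑ l, ∑ m, ∑ p : Fin n, a k * a l * a m * a p * (dd k l * dd m p)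
    = (∑ i, a i * a i) * (∑ i, a i * a i) := by
  simp [dd, mul_ite, ite_mul, mul_one, mul_zero, zero_mul, Finset.sum_ite_eq,
    ← Finset.mul_sum, ← Finset.sum_mul, ha]
  rw [← prodsum2]
  exact Finset.sum_congr rfl fun x _ => Finset.sum_congr rfl fun y _ => by ring

include ha in
lemma w4_kmlp : ∑ k, ∑ l, ∑ m, ∑ p : Fin n, a k * a l * a m * a p * (dd k m * dd l p)
    = (∑ i, a i * a i) * (∑ i, a i * a i) := by
  simp [dd, mul_ite, ite_mul, mul_one, mul_zero, zero_mul, Finset.sum_ite_eq,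
    ← Finset.mul_sum, ← Finset.sum_mul, ha]
  rw [← prodsum2]
  exact Finset.sum_congr rfl fun x _ => Finset.sum_congr rfl fun y _ => by ring

include ha in
lemma w4_kplm : ∑ k, ∑ l, ∑ m, ∑ p : Fin n, a k * a l * a m * a p * (dd k p * dd l m)
    = (∑ i, a i * a i) * (∑ i, a i * a i) := by
  simp [dd, mul_ite, ite_mul, mul_one, mul_zero, zero_mul, Finset.sum_ite_eq,
    ← Finset.mul_sum, ← Finset.sum_mul, ha]
  calc ∑ x : Fin n, (∑ i : Fin n, a x * a i * a i) * a x
      = ∑ x : Fin n, ∑ i : Fin n, (a x * a x) * (a i * a i) := by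
        refine Finset.sum_congr rfl fun x _ => ?_
        rw [Finset.sum_mul]
        exact Finset.sum_congr rfl fun i _ => by ring
    _ = (∑ i, a i * a i) * (∑ i, a i * a i) := prodsum2 _ _

include ha in
lemma w4_tklm : ∑ k, ∑ l, ∑ m, ∑ p : Fin n, a k * a l * a m * a p * (dd k l * dd k m)
    = ∑ i, a i * a i * a i := by
  simp [dd, mul_ite, ite_mul, mul_one, mul_zero, zero_mul, Finset.sum_ite_eq,
    ← Finset.mul_sum, ← Finset.sum_mul, ha]

include ha in
lemma w4_tklp : ∑ k, ∑ l, ∑ m, ∑ p : Fin n, a k * a l * a m * a p * (dd k l * dd k p)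
    = ∑ i, a i * a i * a i := by
  simp [dd, mul_ite, ite_mul, mul_one, mul_zero, zero_mul, Finset.sum_ite_eq,
    ← Finset.mul_sum, ← Finset.sum_mul, ha]

include ha in
lemma w4_tkmp : ∑ k, ∑ l, ∑ m, ∑ p : Fin n, a k * a l * a m * a p * (dd k m * dd k p)
    = ∑ i, a i * a i * a i := by
  simp [dd, mul_ite, ite_mul, mul_one, mul_zero, zero_mul, Finset.sum_ite_eq,
    ← Finset.mul_sum, ← Finset.sum_mul, ha]

include ha in
lemma w4_tlmp : ∑ k, ∑ l, ∑ m, ∑ p : Fin n, a k * a l * a m * a p * (dd l m * dd l p)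
    = ∑ i, a i * a i * a i := by
  simp [dd, mul_ite, ite_mul, mul_one, mul_zero, zero_mul, Finset.sum_ite_eq,
    ← Finset.mul_sum, ← Finset.sum_mul, ha]
  calc ∑ x : Fin n, ∑ y : Fin n, a x * a y * a y * a y
      = (∑ x, a x) * (∑ y, a y * a y * a y) := by
        rw [← prodsum2]
        exact Finset.sum_congr rfl fun x _ => Finset.sum_congr rfl fun y _ => by ring
    _ = ∑ i, a i * a i * a i := by rw [ha, one_mul]

include ha in
lemma w4_q : ∑ k, ∑ l, ∑ m, ∑ p : Fin n, a k * a l * a m * a p * (dd k l * dd k m * dd k p)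
    = ∑ i, a i * a i * a i * a i := by
  simp [dd, mul_ite, ite_mul, mul_one, mul_zero, zero_mul, Finset.sum_ite_eq,
    ← Finset.mul_sum, ← Finset.sum_mul, ha]

include ha in
lemma w3_0 : ∑ k, ∑ l, ∑ m : Fin n, a k * a l * a m = 1 := by
  rw [← sum_pow_three, ha, one_pow]

include ha in
lemma w3_kl : ∑ k, ∑ l, ∑ m : Fin n, a k * a l * a m * dd k l = ∑ i, a i * a i := by
  simp [dd, mul_ite, ite_mul, mul_one, mul_zero, zero_mul, Finset.sum_ite_eq,
    ← Finset.mul_sum, ← Finset.sum_mul, ha]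

include ha in
lemma w3_km : ∑ k, ∑ l, ∑ m : Fin n, a k * a l * a m * dd k m = ∑ i, a i * a i := by
  simp [dd, mul_ite, ite_mul, mul_one, mul_zero, zero_mul, Finset.sum_ite_eq,
    ← Finset.mul_sum, ← Finset.sum_mul, ha]

include ha in
lemma w3_lm : ∑ k, ∑ l, ∑ m : Fin n, a k * a l * a m * dd l m = ∑ i, a i * a i := by
  simp [dd, mul_ite, ite_mul, mul_one, mul_zero, zero_mul, Finset.sum_ite_eq,
    ← Finset.mul_sum, ← Finset.sum_mul, ha]
  calc ∑ x : Fin n, ∑ y : Fin n, a x * a y * a y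
      = (∑ x, a x) * (∑ y, a y * a y) := by
        rw [← prodsum2]
        exact Finset.sum_congr rfl fun x _ => Finset.sum_congr rfl fun y _ => by ring
    _ = ∑ i, a i * a i := by rw [ha, one_mul]

include ha in
lemma w3_t : ∑ k, ∑ l, ∑ m : Fin n, a k * a l * a m * (dd k l * dd k m)
    = ∑ i, a i * a i * a i := by
  simp [dd, mul_ite, ite_mul, mul_one, mul_zero, zero_mul, Finset.sum_ite_eq,
    ← Finset.mul_sum, ← Finset.sum_mul, ha]

include ha in
lemma w2_0 : ∑ k, ∑ l : Fin n, a k * a l = 1 := by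
  rw [← sum_pow_two', ha, one_pow]

include ha in
lemma w2_kl : ∑ k, ∑ l : Fin n, a k * a l * dd k l = ∑ i, a i * a i := by
  simp [dd, mul_ite, ite_mul, mul_one, mul_zero, zero_mul, Finset.sum_ite_eq,
    ← Finset.mul_sum, ← Finset.sum_mul, ha]
end MONO

section A
variable {n : ℕ} (P : Measure Ω) [IsProbabilityMeasure P] (Z : Fin n → Ω → ℝ)
  (hmeas : ∀ i, Measurable (Z i)) (hsphere : ∀ ω, ∑ i, (Z i ω) ^ 2 = 1)
  (hPerm : ∀ (m : Fin n → ℕ) (σ : Equiv.Perm (Fin n)), (∑ i, m i) ≤ 4 →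
      ∫ ω, ∏ i, Z i ω ^ (2 * m i) ∂P = ∫ ω, ∏ i, Z i ω ^ (2 * m (σ i)) ∂P)

include hsphere in
lemma Zsq_le_one : ∀ (i : Fin n) ω, Z i ω ^ 2 ≤ 1 := by
  intro i ω
  rw [← hsphere ω]
  exact Finset.single_le_sum (f := fun j => Z j ω ^ 2) (fun j _ => sq_nonneg _)
    (Finset.mem_univ i)

include hsphere in
lemma Zabs_le_one : ∀ (i : Fin n) ω, |Z i ω| ≤ 1 := by
  intro i ω
  have := Zsq_le_one Z hsphere i ω
  nlinarith [abs_nonneg (Z i ω), sq_abs (Z i ω)]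

include hmeas hsphere in
lemma intU : ∀ e : Fin n → ℕ, Integrable (fun ω => ∏ i, Z i ω ^ e i) P := by
  intro e
  have hm : Measurable (fun ω => ∏ i, Z i ω ^ e i) :=
    Finset.measurable_prod _ (fun i _ => (hmeas i).pow_const _)
  refine (integrable_const (1 : ℝ)).mono' hm.aestronglyMeasurable ?_
  filter_upwards with ω
  rw [Real.norm_eq_abs, Finset.abs_prod]
  refine Finset.prod_le_one (fun i _ => abs_nonneg _) (fun i _ => ?_)
  rw [abs_pow]
  exact pow_le_one₀ (abs_nonneg _) (Zabs_le_one Z hsphere i ω)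

/-- pointwise: product with one extra square -/
lemma prod_bump (m : Fin n → ℕ) (j : Fin n) (ω : Ω) :
    ∏ i, Z i ω ^ (2 * (m i + DD j i)) = (∏ i, Z i ω ^ (2 * m i)) * Z j ω ^ 2 := by
  have : ∀ i : Fin n, Z i ω ^ (2 * (m i + DD j i))
      = Z i ω ^ (2 * m i) * (if j = i then Z i ω ^ 2 else 1) := by
    intro i
    unfold DD
    by_cases h : j = i <;> simp [h, mul_add, pow_add]
  rw [Finset.prod_congr rfl (fun i _ => this i), Finset.prod_mul_distrib,
    Finset.prod_ite_eq]
  simp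

include hmeas hsphere in
lemma Ifn_shift (m : Fin n → ℕ) :
    Ifn P Z m = ∑ j, Ifn P Z (fun i => m i + DD j i) := by
  unfold Ifn
  have key : ∀ ω, ∏ i, Z i ω ^ (2 * m i)
      = ∑ j, ∏ i, Z i ω ^ (2 * (m i + DD j i)) := by
    intro ω
    simp only [prod_bump Z m _ ω]
    rw [← Finset.mul_sum, hsphere ω, mul_one]
  rw [integral_congr_ae (Filter.Eventually.of_forall key),
    integral_finset_sum _ (fun j _ => intU P Z hmeas hsphere _)]

include hPerm in
lemma Ifn_sym (m : Fin n → ℕ) (σ : Equiv.Perm (Fin n)) (h : (∑ i, m i) ≤ 4) :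
    Ifn P Z m = Ifn P Z (m ∘ σ) := hPerm m σ h

include hPerm in
lemma Ifn_bump {r : ℕ} (c : Fin r → ℕ) (f g : Fin r → Fin n)
    (hf : Function.Injective f) (hg : Function.Injective g) (hc : (∑ t, c t) ≤ 4) :
    Ifn P Z (fun i => ∑ t, if f t = i then c t else 0)
      = Ifn P Z (fun i => ∑ t, if g t = i then c t else 0) := by
  obtain ⟨σ, hσ⟩ := perm_extend f g hf hg
  have hsum : (∑ i, ∑ t, if g t = i then c t else 0) ≤ 4 := by
    rw [Finset.sum_comm]
    simp only [Finset.sum_ite_eq, Finset.mem_univ, if_true]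
    exact hc
  have := Ifn_sym P Z hPerm (fun i => ∑ t, if g t = i then c t else 0) σ hsum
  rw [this]
  congr 1
  funext i
  simp only [Function.comp]
  refine Finset.sum_congr rfl (fun t _ => ?_)
  refine if_congr ?_ rfl rfl
  rw [← hσ t]
  exact (Equiv.apply_eq_iff_eq σ).symm
include hPerm in
lemma H1 (k : Fin n) (c : ℕ) (hc : c ≤ 4) :
    Ifn P Z (fun i => c * DD k i) = Ifn P Z (patt [c]) := by
  have h1n : 1 ≤ n := Nat.one_le_iff_ne_zero.mpr (by rintro rfl; exact k.elim0)
  have key := Ifn_bump P Z hPerm (fun t : Fin 1 => ([c] : List ℕ).getD t.val 0)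
    ![k] (Fin.castLE h1n) (fun s t _ => Subsingleton.elim s t)
    (Fin.castLE_injective h1n) (by simpa using hc)
  have e1 : (fun i : Fin n => c * DD k i)
      = (fun i : Fin n => ∑ t : Fin 1, if ![k] t = i then ([c] : List ℕ).getD t.val 0 else 0) := by
    funext i; simp [DD, mul_ite]
  have e2 : (patt [c] : Fin n → ℕ)
      = (fun i : Fin n => ∑ t : Fin 1,
          if Fin.castLE h1n t = i then ([c] : List ℕ).getD t.val 0 else 0) := by
    funext i; exact patt_castLE h1n [c] (by simp) i
  rw [e1, e2]; exact key

include hPerm in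
lemma H2 (k l : Fin n) (hkl : k ≠ l) (c d : ℕ) (hc : c + d ≤ 4) :
    Ifn P Z (fun i => c * DD k i + d * DD l i) = Ifn P Z (patt [c, d]) := by
  have h2n : 2 ≤ n := by
    by_contra h
    push_neg at h
    interval_cases n
    · exact k.elim0
    · exact hkl (Subsingleton.elim k l)
  have key := Ifn_bump P Z hPerm (fun t : Fin 2 => ([c, d] : List ℕ).getD t.val 0)
    ![k, l] (Fin.castLE h2n) (inj2 k l hkl) (Fin.castLE_injective h2n)
    (by simpa [Fin.sum_univ_two] using hc)
  have e1 : (fun i : Fin n => c * DD k i + d * DD l i)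
      = (fun i : Fin n => ∑ t : Fin 2,
          if ![k, l] t = i then ([c, d] : List ℕ).getD t.val 0 else 0) := by
    funext i; simp [DD, mul_ite, Fin.sum_univ_two]
  have e2 : (patt [c, d] : Fin n → ℕ)
      = (fun i : Fin n => ∑ t : Fin 2,
          if Fin.castLE h2n t = i then ([c, d] : List ℕ).getD t.val 0 else 0) := by
    funext i; exact patt_castLE h2n [c, d] (by simp) i
  rw [e1, e2]; exact key

include hPerm in
lemma H3 (k l m : Fin n) (h1 : k ≠ l) (h2 : k ≠ m) (h3 : l ≠ m) (c d e : ℕ)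
    (hc : c + d + e ≤ 4) :
    Ifn P Z (fun i => c * DD k i + d * DD l i + e * DD m i) = Ifn P Z (patt [c, d, e]) := by
  have h3n : 3 ≤ n := by
    by_contra h
    push_neg at h
    interval_cases n
    · exact k.elim0
    · exact h1 (Subsingleton.elim k l)
    · fin_cases k <;> fin_cases l <;> fin_cases m <;> simp_all
  have key := Ifn_bump P Z hPerm (fun t : Fin 3 => ([c, d, e] : List ℕ).getD t.val 0)
    ![k, l, m] (Fin.castLE h3n) (inj3 k l m h1 h2 h3) (Fin.castLE_injective h3n)
    (by simpa [Fin.sum_univ_three] using by omega)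
  have e1 : (fun i : Fin n => c * DD k i + d * DD l i + e * DD m i)
      = (fun i : Fin n => ∑ t : Fin 3,
          if ![k, l, m] t = i then ([c, d, e] : List ℕ).getD t.val 0 else 0) := by
    funext i; simp [DD, mul_ite, Fin.sum_univ_three]
    congr
  have e2 : (patt [c, d, e] : Fin n → ℕ)
      = (fun i : Fin n => ∑ t : Fin 3,
          if Fin.castLE h3n t = i then ([c, d, e] : List ℕ).getD t.val 0 else 0) := by
    funext i; exact patt_castLE h3n [c, d, e] (by simp) i
  rw [e1, e2]; exact key

include hPerm in
lemma H4 (k l m p : Fin n) (h1 : k ≠ l) (h2 : k ≠ m) (h3 : k ≠ p) (h4 : l ≠ m)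
    (h5 : l ≠ p) (h6 : m ≠ p) (c d e f : ℕ) (hc : c + d + e + f ≤ 4) :
    Ifn P Z (fun i => c * DD k i + d * DD l i + e * DD m i + f * DD p i)
      = Ifn P Z (patt [c, d, e, f]) := by
  have h4n : 4 ≤ n := by
    by_contra h
    push_neg at h
    interval_cases n
    · exact k.elim0
    · exact h1 (Subsingleton.elim k l)
    · fin_cases k <;> fin_cases l <;> fin_cases m <;> simp_all
    · fin_cases k <;> fin_cases l <;> fin_cases m <;> fin_cases p <;> simp_all
  have key := Ifn_bump P Z hPerm (fun t : Fin 4 => ([c, d, e, f] : List ℕ).getD t.val 0)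
    ![k, l, m, p] (Fin.castLE h4n) (inj4 k l m p h1 h2 h3 h4 h5 h6)
    (Fin.castLE_injective h4n)
    (by simpa [Fin.sum_univ_four, show ((3 : Fin 4) : ℕ) = 3 from rfl] using by omega)
  have e1 : (fun i : Fin n => c * DD k i + d * DD l i + e * DD m i + f * DD p i)
      = (fun i : Fin n => ∑ t : Fin 4,
          if ![k, l, m, p] t = i then ([c, d, e, f] : List ℕ).getD t.val 0 else 0) := by
    funext i; simp [DD, mul_ite, Fin.sum_univ_four, show ((3 : Fin 4) : ℕ) = 3 from rfl]
    congr
  have e2 : (patt [c, d, e, f] : Fin n → ℕ)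
      = (fun i : Fin n => ∑ t : Fin 4,
          if Fin.castLE h4n t = i then ([c, d, e, f] : List ℕ).getD t.val 0 else 0) := by
    funext i; exact patt_castLE h4n [c, d, e, f] (by simp) i
  rw [e1, e2]; exact key
include hmeas hsphere hPerm in
lemma R1 (hn : 4 ≤ n) : (1 : ℝ) = (n : ℝ) * Ifn P Z (patt [1]) := by
  have h0 := Ifn_shift P Z hmeas hsphere (fun _ => 0)
  have hz : Ifn P Z (fun _ => 0) = 1 := by
    unfold Ifn; simp
  have hj : ∀ j : Fin n, Ifn P Z (fun i => (fun _ => 0) i + DD j i) = Ifn P Z (patt [1]) := by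
    intro j
    rw [show (fun i => (fun _ => (0:ℕ)) i + DD j i) = (fun i => 1 * DD j i) from by
      funext i; ring]
    exact H1 P Z hPerm j 1 (by norm_num)
  rw [hz, Finset.sum_congr rfl (fun j _ => hj j), Finset.sum_const, Finset.card_univ,
    Fintype.card_fin, nsmul_eq_mul] at h0
  exact h0

include hmeas hsphere hPerm in
lemma Rstep1 (hn : 4 ≤ n) (c : ℕ) (hc : 1 ≤ c) (hc4 : c + 1 ≤ 4) :
    Ifn P Z (patt [c])
      = Ifn P Z (patt [c + 1]) + ((n : ℝ) - 1) * Ifn P Z (patt [c, 1]) := by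
  have i0 : Fin n := ⟨0, by omega⟩
  have h0 := Ifn_shift P Z hmeas hsphere (fun i => c * DD i0 i)
  have hL := H1 P Z hPerm i0 c (by omega)
  have hj : ∀ j : Fin n, Ifn P Z (fun i => (fun i => c * DD i0 i) i + DD j i)
      = if j = i0 then Ifn P Z (patt [c + 1]) else Ifn P Z (patt [c, 1]) := by
    intro j
    by_cases h : j = i0
    · subst h
      rw [if_pos rfl, ← H1 P Z hPerm j (c + 1) (by omega)]
      congr 1
      funext i
      ring
    · rw [if_neg h, ← H2 P Z hPerm i0 j (Ne.symm h) c 1 (by omega)]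
      congr 1
      funext i
      ring
  rw [← hL, h0]
  exact sum_ite1 i0 _ _ _ hj

include hmeas hsphere hPerm in
lemma R4 (hn : 4 ≤ n) : Ifn P Z (patt [1, 1])
    = Ifn P Z (patt [2, 1]) + Ifn P Z (patt [2, 1])
      + ((n : ℝ) - 2) * Ifn P Z (patt [1, 1, 1]) := by
  set i0 : Fin n := ⟨0, by omega⟩ with hdef0
  set i1 : Fin n := ⟨1, by omega⟩ with hdef1
  have h01 : i0 ≠ i1 := Fin.ne_of_val_ne (by norm_num)
  have h0 := Ifn_shift P Z hmeas hsphere (fun i => 1 * DD i0 i + 1 * DD i1 i)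
  have hL := H2 P Z hPerm i0 i1 h01 1 1 (by norm_num)
  have hj : ∀ j : Fin n, Ifn P Z (fun i => (fun i => 1 * DD i0 i + 1 * DD i1 i) i + DD j i)
      = if j = i0 then Ifn P Z (patt [2, 1]) else if j = i1 then Ifn P Z (patt [2, 1])
        else Ifn P Z (patt [1, 1, 1]) := by
    intro j
    by_cases h : j = i0
    · subst h
      rw [if_pos rfl, ← H2 P Z hPerm i0 i1 h01 2 1 (by norm_num)]
      congr 1
      funext i
      ring
    · by_cases h' : j = i1
      · subst h'
        rw [if_neg h, if_pos rfl, ← H2 P Z hPerm i1 i0 (Ne.symm h01) 2 1 (by norm_num)]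
        congr 1
        funext i
        ring
      · rw [if_neg h, if_neg h',
          ← H3 P Z hPerm i0 i1 j h01 (Ne.symm h) (Ne.symm h') 1 1 1 (by norm_num)]
        congr 1
        funext i
        ring
  rw [← hL, h0]
  exact sum_ite2 i0 i1 h01 _ _ _ _ hj

include hmeas hsphere hPerm in
lemma R6 (hn : 4 ≤ n) : Ifn P Z (patt [2, 1])
    = Ifn P Z (patt [3, 1]) + Ifn P Z (patt [2, 2])
      + ((n : ℝ) - 2) * Ifn P Z (patt [2, 1, 1]) := by
  set i0 : Fin n := ⟨0, by omega⟩ with hdef0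
  set i1 : Fin n := ⟨1, by omega⟩ with hdef1
  have h01 : i0 ≠ i1 := Fin.ne_of_val_ne (by norm_num)
  have h0 := Ifn_shift P Z hmeas hsphere (fun i => 2 * DD i0 i + 1 * DD i1 i)
  have hL := H2 P Z hPerm i0 i1 h01 2 1 (by norm_num)
  have hj : ∀ j : Fin n, Ifn P Z (fun i => (fun i => 2 * DD i0 i + 1 * DD i1 i) i + DD j i)
      = if j = i0 then Ifn P Z (patt [3, 1]) else if j = i1 then Ifn P Z (patt [2, 2])
        else Ifn P Z (patt [2, 1, 1]) := by
    intro j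
    by_cases h : j = i0
    · subst h
      rw [if_pos rfl, ← H2 P Z hPerm i0 i1 h01 3 1 (by norm_num)]
      congr 1
      funext i
      ring
    · by_cases h' : j = i1
      · subst h'
        rw [if_neg h, if_pos rfl, ← H2 P Z hPerm i0 i1 h01 2 2 (by norm_num)]
        congr 1
        funext i
        ring
      · rw [if_neg h, if_neg h',
          ← H3 P Z hPerm i0 i1 j h01 (Ne.symm h) (Ne.symm h') 2 1 1 (by norm_num)]
        congr 1
        funext i
        ring
  rw [← hL, h0]
  exact sum_ite2 i0 i1 h01 _ _ _ _ hj

include hmeas hsphere hPerm in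
lemma R7 (hn : 4 ≤ n) : Ifn P Z (patt [1, 1, 1])
    = Ifn P Z (patt [2, 1, 1]) + Ifn P Z (patt [2, 1, 1]) + Ifn P Z (patt [2, 1, 1])
      + ((n : ℝ) - 3) * Ifn P Z (patt [1, 1, 1, 1]) := by
  set i0 : Fin n := ⟨0, by omega⟩ with hdef0
  set i1 : Fin n := ⟨1, by omega⟩ with hdef1
  set i2 : Fin n := ⟨2, by omega⟩ with hdef2
  have h01 : i0 ≠ i1 := Fin.ne_of_val_ne (by norm_num)
  have h02 : i0 ≠ i2 := Fin.ne_of_val_ne (by norm_num)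
  have h12 : i1 ≠ i2 := Fin.ne_of_val_ne (by norm_num)
  have h0 := Ifn_shift P Z hmeas hsphere (fun i => 1 * DD i0 i + 1 * DD i1 i + 1 * DD i2 i)
  have hL := H3 P Z hPerm i0 i1 i2 h01 h02 h12 1 1 1 (by norm_num)
  have hj : ∀ j : Fin n,
      Ifn P Z (fun i => (fun i => 1 * DD i0 i + 1 * DD i1 i + 1 * DD i2 i) i + DD j i)
      = if j = i0 then Ifn P Z (patt [2, 1, 1]) else if j = i1 then Ifn P Z (patt [2, 1, 1])
        else if j = i2 then Ifn P Z (patt [2, 1, 1]) else Ifn P Z (patt [1, 1, 1, 1]) := by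
    intro j
    by_cases h : j = i0
    · subst h
      rw [if_pos rfl, ← H3 P Z hPerm i0 i1 i2 h01 h02 h12 2 1 1 (by norm_num)]
      congr 1
      funext i
      ring
    · by_cases h' : j = i1
      · subst h'
        rw [if_neg h, if_pos rfl,
          ← H3 P Z hPerm i1 i0 i2 (Ne.symm h01) h12 h02 2 1 1 (by norm_num)]
        congr 1
        funext i
        ring
      · by_cases h'' : j = i2
        · subst h''
          rw [if_neg h, if_neg h', if_pos rfl,
            ← H3 P Z hPerm i2 i0 i1 (Ne.symm h02) (Ne.symm h12) h01 2 1 1 (by norm_num)]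
          congr 1
          funext i
          ring
        · rw [if_neg h, if_neg h', if_neg h'',
            ← H4 P Z hPerm i0 i1 i2 j h01 h02 (Ne.symm h) h12 (Ne.symm h') (Ne.symm h'')
              1 1 1 1 (by norm_num)]
          congr 1
          funext i
          ring
  rw [← hL, h0]
  exact sum_ite3 i0 i1 i2 h01 h02 h12 _ _ _ _ _ hj

include hPerm in
lemma phi1 (k : Fin n) : Ifn P Z (fun i => DD k i) = Ifn P Z (patt [1]) := by
  rw [show (fun i => DD k i) = (fun i => 1 * DD k i) from by funext i; ring]
  exact H1 P Z hPerm k 1 (by norm_num)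

include hPerm in
lemma phi2 (k l : Fin n) : Ifn P Z (fun i => DD k i + DD l i)
    = Ifn P Z (patt [1, 1]) + (Ifn P Z (patt [2]) - Ifn P Z (patt [1, 1])) * dd k l := by
  by_cases h1 : k = l
  · subst h1
    rw [show (fun i => DD k i + DD k i) = (fun i => 2 * DD k i) from by funext i; ring,
      H1 P Z hPerm k 2 (by norm_num)]
    simp [dd]
  · rw [show (fun i => DD k i + DD l i) = (fun i => 1 * DD k i + 1 * DD l i) from by
      funext i; ring, H2 P Z hPerm k l h1 1 1 (by norm_num)]
    simp [dd, h1]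

include hPerm in
lemma phi3 (k l m : Fin n) : Ifn P Z (fun i => DD k i + DD l i + DD m i)
    = Ifn P Z (patt [1, 1, 1])
      + (Ifn P Z (patt [2, 1]) - Ifn P Z (patt [1, 1, 1])) * (dd k l + dd k m + dd l m)
      + (Ifn P Z (patt [3]) - 3 * Ifn P Z (patt [2, 1]) + 2 * Ifn P Z (patt [1, 1, 1]))
        * (dd k l * dd k m) := by
  by_cases h1 : k = l
  · subst h1
    by_cases h2 : k = m
    · subst h2
      rw [show (fun i => DD k i + DD k i + DD k i) = (fun i => 3 * DD k i) from by
        funext i; ring, H1 P Z hPerm k 3 (by norm_num)]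
      simp [dd]
      try ring
    · rw [show (fun i => DD k i + DD k i + DD m i) = (fun i => 2 * DD k i + 1 * DD m i) from by
        funext i; ring, H2 P Z hPerm k m h2 2 1 (by norm_num)]
      simp [dd, h2]
  · by_cases h2 : k = m
    · subst h2
      rw [show (fun i => DD k i + DD l i + DD k i) = (fun i => 2 * DD k i + 1 * DD l i) from by
        funext i; ring, H2 P Z hPerm k l h1 2 1 (by norm_num)]
      simp [dd, h1, Ne.symm h1]
      try ring
    · by_cases h3 : l = m
      · subst h3
        rw [show (fun i => DD k i + DD l i + DD l i) = (fun i => 2 * DD l i + 1 * DD k i) from by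
          funext i; ring, H2 P Z hPerm l k (Ne.symm h1) 2 1 (by norm_num)]
        simp [dd, h1, h2]
      · rw [show (fun i => DD k i + DD l i + DD m i)
            = (fun i => 1 * DD k i + 1 * DD l i + 1 * DD m i) from by
          funext i; ring, H3 P Z hPerm k l m h1 h2 h3 1 1 1 (by norm_num)]
        simp [dd, h1, h2, h3]

include hPerm in
lemma phi4 (k l m p : Fin n) : Ifn P Z (fun i => DD k i + DD l i + DD m i + DD p i)
    = Ifn P Z (patt [1, 1, 1, 1])
      + (Ifn P Z (patt [2, 1, 1]) - Ifn P Z (patt [1, 1, 1, 1]))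
        * (dd k l + dd k m + dd k p + dd l m + dd l p + dd m p)
      + (Ifn P Z (patt [2, 2]) - 2 * Ifn P Z (patt [2, 1, 1]) + Ifn P Z (patt [1, 1, 1, 1]))
        * (dd k l * dd m p + dd k m * dd l p + dd k p * dd l m)
      + (Ifn P Z (patt [3, 1]) - 3 * Ifn P Z (patt [2, 1, 1])
          + 2 * Ifn P Z (patt [1, 1, 1, 1]))
        * (dd k l * dd k m + dd k l * dd k p + dd k m * dd k p + dd l m * dd l p)
      + (Ifn P Z (patt [4]) - 4 * Ifn P Z (patt [3, 1]) - 3 * Ifn P Z (patt [2, 2])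
          + 12 * Ifn P Z (patt [2, 1, 1]) - 6 * Ifn P Z (patt [1, 1, 1, 1]))
        * (dd k l * dd k m * dd k p) := by
  by_cases h1 : k = l
  · subst h1
    by_cases h2 : k = m
    · subst h2
      by_cases h3 : k = p
      · subst h3
        rw [show (fun i => DD k i + DD k i + DD k i + DD k i) = (fun i => 4 * DD k i) from by
          funext i; ring, H1 P Z hPerm k 4 (by norm_num)]
        simp [dd]
        try ring
      · rw [show (fun i => DD k i + DD k i + DD k i + DD p i)
            = (fun i => 3 * DD k i + 1 * DD p i) from by
          funext i; ring, H2 P Z hPerm k p h3 3 1 (by norm_num)]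
        simp [dd, h3]
        try ring
    · by_cases h3 : k = p
      · subst h3
        rw [show (fun i => DD k i + DD k i + DD m i + DD k i)
            = (fun i => 3 * DD k i + 1 * DD m i) from by
          funext i; ring, H2 P Z hPerm k m h2 3 1 (by norm_num)]
        simp [dd, h2, Ne.symm h2]
        try ring
      · by_cases h4 : m = p
        · subst h4
          rw [show (fun i => DD k i + DD k i + DD m i + DD m i)
              = (fun i => 2 * DD k i + 2 * DD m i) from by
            funext i; ring, H2 P Z hPerm k m h2 2 2 (by norm_num)]
          simp [dd, h2, h3, Ne.symm h2]
          try ring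
        · rw [show (fun i => DD k i + DD k i + DD m i + DD p i)
              = (fun i => 2 * DD k i + 1 * DD m i + 1 * DD p i) from by
            funext i; ring, H3 P Z hPerm k m p h2 h3 h4 2 1 1 (by norm_num)]
          simp [dd, h2, h3, h4, Ne.symm h2, Ne.symm h3, Ne.symm h4]
          try ring
  · by_cases h2 : k = m
    · subst h2
      by_cases h3 : k = p
      · subst h3
        rw [show (fun i => DD k i + DD l i + DD k i + DD k i)
            = (fun i => 3 * DD k i + 1 * DD l i) from by
          funext i; ring, H2 P Z hPerm k l h1 3 1 (by norm_num)]
        simp [dd, h1, Ne.symm h1]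
        try ring
      · by_cases h4 : l = p
        · subst h4
          rw [show (fun i => DD k i + DD l i + DD k i + DD l i)
              = (fun i => 2 * DD k i + 2 * DD l i) from by
            funext i; ring, H2 P Z hPerm k l h1 2 2 (by norm_num)]
          simp [dd, h1, h3, Ne.symm h1]
          try ring
        · rw [show (fun i => DD k i + DD l i + DD k i + DD p i)
              = (fun i => 2 * DD k i + 1 * DD l i + 1 * DD p i) from by
            funext i; ring, H3 P Z hPerm k l p h1 h3 h4 2 1 1 (by norm_num)]
          simp [dd, h1, h3, h4, Ne.symm h1, Ne.symm h3, Ne.symm h4]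
          try ring
    · by_cases h3 : k = p
      · subst h3
        by_cases h4 : l = m
        · subst h4
          rw [show (fun i => DD k i + DD l i + DD l i + DD k i)
              = (fun i => 2 * DD k i + 2 * DD l i) from by
            funext i; ring, H2 P Z hPerm k l h1 2 2 (by norm_num)]
          simp [dd, h1, h2, Ne.symm h1, Ne.symm h2]
          try ring
        · rw [show (fun i => DD k i + DD l i + DD m i + DD k i)
              = (fun i => 2 * DD k i + 1 * DD l i + 1 * DD m i) from by
            funext i; ring, H3 P Z hPerm k l m h1 h2 h4 2 1 1 (by norm_num)]
          simp [dd, h1, h2, h4, Ne.symm h1, Ne.symm h2, Ne.symm h4]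
          try ring
      · by_cases h4 : l = m
        · subst h4
          by_cases h5 : l = p
          · subst h5
            rw [show (fun i => DD k i + DD l i + DD l i + DD l i)
                = (fun i => 3 * DD l i + 1 * DD k i) from by
              funext i; ring, H2 P Z hPerm l k (Ne.symm h1) 3 1 (by norm_num)]
            simp [dd, h1, h2, h3, Ne.symm h1]
            try ring
          · rw [show (fun i => DD k i + DD l i + DD l i + DD p i)
                = (fun i => 2 * DD l i + 1 * DD k i + 1 * DD p i) from by
              funext i; ring, H3 P Z hPerm l k p (Ne.symm h1) h5 h3 2 1 1 (by norm_num)]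
            simp [dd, h1, h2, h3, h5, Ne.symm h1, Ne.symm h5]
            try ring
        · by_cases h5 : l = p
          · subst h5
            rw [show (fun i => DD k i + DD l i + DD m i + DD l i)
                = (fun i => 2 * DD l i + 1 * DD k i + 1 * DD m i) from by
              funext i; ring, H3 P Z hPerm l k m (Ne.symm h1) h4 h2 2 1 1 (by norm_num)]
            simp [dd, h1, h2, h3, h4, Ne.symm h1, Ne.symm h4]
            try ring
          · by_cases h6 : m = p
            · subst h6
              rw [show (fun i => DD k i + DD l i + DD m i + DD m i)
                  = (fun i => 2 * DD m i + 1 * DD k i + 1 * DD l i) from by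
                funext i; ring,
                H3 P Z hPerm m k l (Ne.symm h2) (Ne.symm h4) h1 2 1 1 (by norm_num)]
              simp [dd, h1, h2, h4, Ne.symm h1, Ne.symm h2, Ne.symm h4]
              try ring
            · rw [show (fun i => DD k i + DD l i + DD m i + DD p i)
                  = (fun i => 1 * DD k i + 1 * DD l i + 1 * DD m i + 1 * DD p i) from by
                funext i; ring,
                H4 P Z hPerm k l m p h1 h2 h3 h4 h5 h6 1 1 1 1 (by norm_num)]
              simp [dd, h1, h2, h3, h4, h5, h6]
lemma prod_DD1 (k : Fin n) (ω : Ω) : ∏ i, Z i ω ^ (2 * DD k i) = Z k ω ^ 2 := by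
  simpa using prod_bump Z (fun _ => 0) k ω

lemma prod_DD2 (k l : Fin n) (ω : Ω) :
    ∏ i, Z i ω ^ (2 * (DD k i + DD l i)) = Z k ω ^ 2 * Z l ω ^ 2 := by
  have e : ∀ i : Fin n, Z i ω ^ (2 * (DD k i + DD l i))
      = Z i ω ^ (2 * DD k i) * Z i ω ^ (2 * DD l i) := by
    intro i
    rw [← pow_add]
    congr 1
    ring
  rw [Finset.prod_congr rfl (fun i _ => e i), Finset.prod_mul_distrib, prod_DD1, prod_DD1]

lemma prod_DD3 (k l m : Fin n) (ω : Ω) :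
    ∏ i, Z i ω ^ (2 * (DD k i + DD l i + DD m i))
      = Z k ω ^ 2 * Z l ω ^ 2 * Z m ω ^ 2 := by
  have e : ∀ i : Fin n, Z i ω ^ (2 * (DD k i + DD l i + DD m i))
      = Z i ω ^ (2 * (DD k i + DD l i)) * Z i ω ^ (2 * DD m i) := by
    intro i
    rw [← pow_add]
    congr 1
    ring
  rw [Finset.prod_congr rfl (fun i _ => e i), Finset.prod_mul_distrib, prod_DD2, prod_DD1]

lemma prod_DD4 (k l m p : Fin n) (ω : Ω) :
    ∏ i, Z i ω ^ (2 * (DD k i + DD l i + DD m i + DD p i))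
      = Z k ω ^ 2 * Z l ω ^ 2 * Z m ω ^ 2 * Z p ω ^ 2 := by
  have e : ∀ i : Fin n, Z i ω ^ (2 * (DD k i + DD l i + DD m i + DD p i))
      = Z i ω ^ (2 * (DD k i + DD l i + DD m i)) * Z i ω ^ (2 * DD p i) := by
    intro i
    rw [← pow_add]
    congr 1
    ring
  rw [Finset.prod_congr rfl (fun i _ => e i), Finset.prod_mul_distrib, prod_DD3, prod_DD1]

include hmeas hsphere in
lemma intq1 (k : Fin n) : Integrable (fun ω => Z k ω ^ 2) P :=
  (intU P Z hmeas hsphere (fun i => 2 * DD k i)).congr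
    (Filter.Eventually.of_forall fun ω => prod_DD1 Z k ω)

include hmeas hsphere in
lemma intq2 (k l : Fin n) : Integrable (fun ω => Z k ω ^ 2 * Z l ω ^ 2) P :=
  (intU P Z hmeas hsphere (fun i => 2 * (DD k i + DD l i))).congr
    (Filter.Eventually.of_forall fun ω => prod_DD2 Z k l ω)

include hmeas hsphere in
lemma intq3 (k l m : Fin n) : Integrable (fun ω => Z k ω ^ 2 * Z l ω ^ 2 * Z m ω ^ 2) P :=
  (intU P Z hmeas hsphere (fun i => 2 * (DD k i + DD l i + DD m i))).congr
    (Filter.Eventually.of_forall fun ω => prod_DD3 Z k l m ω)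

include hmeas hsphere in
lemma intq4 (k l m p : Fin n) :
    Integrable (fun ω => Z k ω ^ 2 * Z l ω ^ 2 * Z m ω ^ 2 * Z p ω ^ 2) P :=
  (intU P Z hmeas hsphere (fun i => 2 * (DD k i + DD l i + DD m i + DD p i))).congr
    (Filter.Eventually.of_forall fun ω => prod_DD4 Z k l m p ω)

lemma IQ1 (k : Fin n) : ∫ ω, Z k ω ^ 2 ∂P = Ifn P Z (fun i => DD k i) := by
  unfold Ifn
  exact integral_congr_ae (Filter.Eventually.of_forall fun ω => (prod_DD1 Z k ω).symm)

lemma IQ2 (k l : Fin n) : ∫ ω, Z k ω ^ 2 * Z l ω ^ 2 ∂P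
    = Ifn P Z (fun i => DD k i + DD l i) := by
  unfold Ifn
  exact integral_congr_ae (Filter.Eventually.of_forall fun ω => (prod_DD2 Z k l ω).symm)

lemma IQ3 (k l m : Fin n) : ∫ ω, Z k ω ^ 2 * Z l ω ^ 2 * Z m ω ^ 2 ∂P
    = Ifn P Z (fun i => DD k i + DD l i + DD m i) := by
  unfold Ifn
  exact integral_congr_ae (Filter.Eventually.of_forall fun ω => (prod_DD3 Z k l m ω).symm)

lemma IQ4 (k l m p : Fin n) : ∫ ω, Z k ω ^ 2 * Z l ω ^ 2 * Z m ω ^ 2 * Z p ω ^ 2 ∂P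
    = Ifn P Z (fun i => DD k i + DD l i + DD m i + DD p i) := by
  unfold Ifn
  exact integral_congr_ae (Filter.Eventually.of_forall fun ω => (prod_DD4 Z k l m p ω).symm)

include hmeas hsphere in
lemma E1gen (a : Fin n → ℝ) (ha : ∑ i, a i = 1) (A : ℝ)
    (hphi : ∀ k : Fin n, Ifn P Z (fun i => DD k i) = A) :
    ∫ ω, (∑ k, a k * Z k ω ^ 2) ∂P = A := by
  have I1 : ∀ k : Fin n, Integrable (fun ω => a k * Z k ω ^ 2) P :=
    fun k => (intq1 P Z hmeas hsphere k).const_mul _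
  rw [integral_finset_sum _ (fun k _ => I1 k)]
  calc ∑ k, ∫ ω, a k * Z k ω ^ 2 ∂P = ∑ k, a k * A := by
        refine Finset.sum_congr rfl fun k _ => ?_
        rw [integral_const_mul, IQ1, hphi k]
    _ = A := by rw [← Finset.sum_mul, ha, one_mul]

include hmeas hsphere in
lemma E2gen (a : Fin n → ℝ) (ha : ∑ i, a i = 1) (A B : ℝ)
    (hphi : ∀ k l : Fin n, Ifn P Z (fun i => DD k i + DD l i) = A + B * dd k l) :
    ∫ ω, (∑ k, a k * Z k ω ^ 2) ^ 2 ∂P = A + B * (∑ i, a i * a i) := by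
  have I1 : ∀ k l : Fin n, Integrable
      (fun ω => (a k * Z k ω ^ 2) * (a l * Z l ω ^ 2)) P := by
    intro k l
    rw [show (fun ω => (a k * Z k ω ^ 2) * (a l * Z l ω ^ 2))
        = fun ω => (a k * a l) * (Z k ω ^ 2 * Z l ω ^ 2) from by funext ω; ring]
    exact (intq2 P Z hmeas hsphere k l).const_mul _
  calc ∫ ω, (∑ k, a k * Z k ω ^ 2) ^ 2 ∂P
      = ∫ ω, ∑ k, ∑ l, (a k * Z k ω ^ 2) * (a l * Z l ω ^ 2) ∂P :=
        integral_congr_ae (Filter.Eventually.of_forall fun ω => sum_pow_two' _)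
    _ = ∑ k, ∑ l, ∫ ω, (a k * Z k ω ^ 2) * (a l * Z l ω ^ 2) ∂P := by
        rw [integral_finset_sum _ (fun k _ => integrable_finset_sum _ (fun l _ => I1 k l))]
        exact Finset.sum_congr rfl fun k _ => integral_finset_sum _ (fun l _ => I1 k l)
    _ = ∑ k, ∑ l, (a k * a l) * Ifn P Z (fun i => DD k i + DD l i) := by
        refine Finset.sum_congr rfl fun k _ => Finset.sum_congr rfl fun l _ => ?_
        rw [show (fun ω => (a k * Z k ω ^ 2) * (a l * Z l ω ^ 2))
            = fun ω => (a k * a l) * (Z k ω ^ 2 * Z l ω ^ 2) from by funext ω; ring,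
          integral_const_mul, IQ2]
    _ = ∑ k, ∑ l, (A * (a k * a l) + B * (a k * a l * dd k l)) := by
        refine Finset.sum_congr rfl fun k _ => Finset.sum_congr rfl fun l _ => ?_
        rw [hphi k l]
        ring
    _ = A + B * (∑ i, a i * a i) := by
        simp only [Finset.sum_add_distrib, ← Finset.mul_sum]
        rw [w2_kl a ha]
        simp [ha]

include hmeas hsphere in
lemma E3gen (a : Fin n → ℝ) (ha : ∑ i, a i = 1) (A B E : ℝ)
    (hphi : ∀ k l m : Fin n, Ifn P Z (fun i => DD k i + DD l i + DD m i)
      = A + B * (dd k l + dd k m + dd l m) + E * (dd k l * dd k m)) :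
    ∫ ω, (∑ k, a k * Z k ω ^ 2) ^ 3 ∂P
      = A + 3 * B * (∑ i, a i * a i) + E * (∑ i, a i * a i * a i) := by
  have I1 : ∀ k l m : Fin n, Integrable
      (fun ω => (a k * Z k ω ^ 2) * (a l * Z l ω ^ 2) * (a m * Z m ω ^ 2)) P := by
    intro k l m
    rw [show (fun ω => (a k * Z k ω ^ 2) * (a l * Z l ω ^ 2) * (a m * Z m ω ^ 2))
        = fun ω => (a k * a l * a m) * (Z k ω ^ 2 * Z l ω ^ 2 * Z m ω ^ 2) from by
      funext ω; ring]
    exact (intq3 P Z hmeas hsphere k l m).const_mul _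
  calc ∫ ω, (∑ k, a k * Z k ω ^ 2) ^ 3 ∂P
      = ∫ ω, ∑ k, ∑ l, ∑ m, (a k * Z k ω ^ 2) * (a l * Z l ω ^ 2) * (a m * Z m ω ^ 2) ∂P :=
        integral_congr_ae (Filter.Eventually.of_forall fun ω => sum_pow_three _)
    _ = ∑ k, ∑ l, ∑ m, ∫ ω, (a k * Z k ω ^ 2) * (a l * Z l ω ^ 2) * (a m * Z m ω ^ 2) ∂P := by
        rw [integral_finset_sum _ (fun k _ => integrable_finset_sum _
          (fun l _ => integrable_finset_sum _ (fun m _ => I1 k l m)))]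
        refine Finset.sum_congr rfl fun k _ => ?_
        rw [integral_finset_sum _ (fun l _ => integrable_finset_sum _ (fun m _ => I1 k l m))]
        exact Finset.sum_congr rfl fun l _ => integral_finset_sum _ (fun m _ => I1 k l m)
    _ = ∑ k, ∑ l, ∑ m, (a k * a l * a m) * Ifn P Z (fun i => DD k i + DD l i + DD m i) := by
        refine Finset.sum_congr rfl fun k _ => Finset.sum_congr rfl fun l _ =>
          Finset.sum_congr rfl fun m _ => ?_
        rw [show (fun ω => (a k * Z k ω ^ 2) * (a l * Z l ω ^ 2) * (a m * Z m ω ^ 2))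
            = fun ω => (a k * a l * a m) * (Z k ω ^ 2 * Z l ω ^ 2 * Z m ω ^ 2) from by
          funext ω; ring, integral_const_mul, IQ3]
    _ = ∑ k, ∑ l, ∑ m, (A * (a k * a l * a m)
          + (B * (a k * a l * a m * dd k l) + B * (a k * a l * a m * dd k m)
            + B * (a k * a l * a m * dd l m))
          + E * (a k * a l * a m * (dd k l * dd k m))) := by
        refine Finset.sum_congr rfl fun k _ => Finset.sum_congr rfl fun l _ =>
          Finset.sum_congr rfl fun m _ => ?_
        rw [hphi k l m]
        ring
    _ = A + 3 * B * (∑ i, a i * a i) + E * (∑ i, a i * a i * a i) := by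
        simp only [Finset.sum_add_distrib, ← Finset.mul_sum]
        rw [w3_kl a ha, w3_km a ha, w3_lm a ha, w3_t a ha]
        simp [ha]
        rw [w2_0 a ha]
        ring

include hmeas hsphere in
lemma E4gen (a : Fin n → ℝ) (ha : ∑ i, a i = 1) (A B C E F : ℝ)
    (hphi : ∀ k l m p : Fin n, Ifn P Z (fun i => DD k i + DD l i + DD m i + DD p i)
      = A + B * (dd k l + dd k m + dd k p + dd l m + dd l p + dd m p)
        + C * (dd k l * dd m p + dd k m * dd l p + dd k p * dd l m)
        + E * (dd k l * dd k m + dd k l * dd k p + dd k m * dd k p + dd l m * dd l p)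
        + F * (dd k l * dd k m * dd k p)) :
    ∫ ω, (∑ k, a k * Z k ω ^ 2) ^ 4 ∂P
      = A + 6 * B * (∑ i, a i * a i) + 3 * C * ((∑ i, a i * a i) * (∑ i, a i * a i))
        + 4 * E * (∑ i, a i * a i * a i) + F * (∑ i, a i * a i * a i * a i) := by
  have I1 : ∀ k l m p : Fin n, Integrable
      (fun ω => (a k * Z k ω ^ 2) * (a l * Z l ω ^ 2) * (a m * Z m ω ^ 2)
        * (a p * Z p ω ^ 2)) P := by
    intro k l m p
    rw [show (fun ω => (a k * Z k ω ^ 2) * (a l * Z l ω ^ 2) * (a m * Z m ω ^ 2)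
          * (a p * Z p ω ^ 2))
        = fun ω => (a k * a l * a m * a p)
            * (Z k ω ^ 2 * Z l ω ^ 2 * Z m ω ^ 2 * Z p ω ^ 2) from by funext ω; ring]
    exact (intq4 P Z hmeas hsphere k l m p).const_mul _
  calc ∫ ω, (∑ k, a k * Z k ω ^ 2) ^ 4 ∂P
      = ∫ ω, ∑ k, ∑ l, ∑ m, ∑ p, (a k * Z k ω ^ 2) * (a l * Z l ω ^ 2)
          * (a m * Z m ω ^ 2) * (a p * Z p ω ^ 2) ∂P :=
        integral_congr_ae (Filter.Eventually.of_forall fun ω => sum_pow_four _)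
    _ = ∑ k, ∑ l, ∑ m, ∑ p, ∫ ω, (a k * Z k ω ^ 2) * (a l * Z l ω ^ 2)
          * (a m * Z m ω ^ 2) * (a p * Z p ω ^ 2) ∂P := by
        rw [integral_finset_sum _ (fun k _ => integrable_finset_sum _
          (fun l _ => integrable_finset_sum _ (fun m _ => integrable_finset_sum _
            (fun p _ => I1 k l m p))))]
        refine Finset.sum_congr rfl fun k _ => ?_
        rw [integral_finset_sum _ (fun l _ => integrable_finset_sum _
          (fun m _ => integrable_finset_sum _ (fun p _ => I1 k l m p)))]
        refine Finset.sum_congr rfl fun l _ => ?_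
        rw [integral_finset_sum _ (fun m _ => integrable_finset_sum _
          (fun p _ => I1 k l m p))]
        exact Finset.sum_congr rfl fun m _ => integral_finset_sum _ (fun p _ => I1 k l m p)
    _ = ∑ k, ∑ l, ∑ m, ∑ p, (a k * a l * a m * a p)
          * Ifn P Z (fun i => DD k i + DD l i + DD m i + DD p i) := by
        refine Finset.sum_congr rfl fun k _ => Finset.sum_congr rfl fun l _ =>
          Finset.sum_congr rfl fun m _ => Finset.sum_congr rfl fun p _ => ?_
        rw [show (fun ω => (a k * Z k ω ^ 2) * (a l * Z l ω ^ 2) * (a m * Z m ω ^ 2)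
              * (a p * Z p ω ^ 2))
            = fun ω => (a k * a l * a m * a p)
                * (Z k ω ^ 2 * Z l ω ^ 2 * Z m ω ^ 2 * Z p ω ^ 2) from by funext ω; ring,
          integral_const_mul, IQ4]
    _ = ∑ k, ∑ l, ∑ m, ∑ p, (A * (a k * a l * a m * a p)
          + (B * (a k * a l * a m * a p * dd k l) + B * (a k * a l * a m * a p * dd k m)
            + B * (a k * a l * a m * a p * dd k p) + B * (a k * a l * a m * a p * dd l m)
            + B * (a k * a l * a m * a p * dd l p) + B * (a k * a l * a m * a p * dd m p))
          + (C * (a k * a l * a m * a p * (dd k l * dd m p))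
            + C * (a k * a l * a m * a p * (dd k m * dd l p))
            + C * (a k * a l * a m * a p * (dd k p * dd l m)))
          + (E * (a k * a l * a m * a p * (dd k l * dd k m))
            + E * (a k * a l * a m * a p * (dd k l * dd k p))
            + E * (a k * a l * a m * a p * (dd k m * dd k p))
            + E * (a k * a l * a m * a p * (dd l m * dd l p)))
          + F * (a k * a l * a m * a p * (dd k l * dd k m * dd k p))) := by
        refine Finset.sum_congr rfl fun k _ => Finset.sum_congr rfl fun l _ =>
          Finset.sum_congr rfl fun m _ => Finset.sum_congr rfl fun p _ => ?_
        rw [hphi k l m p]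
        ring
    _ = A + 6 * B * (∑ i, a i * a i) + 3 * C * ((∑ i, a i * a i) * (∑ i, a i * a i))
        + 4 * E * (∑ i, a i * a i * a i) + F * (∑ i, a i * a i * a i * a i) := by
        simp only [Finset.sum_add_distrib, ← Finset.mul_sum]
        rw [w4_kl a ha, w4_km a ha, w4_kp a ha, w4_lm a ha, w4_lp a ha,
          w4_mp a ha, w4_klmp a ha, w4_kmlp a ha, w4_kplm a ha, w4_tklm a ha,
          w4_tklp a ha, w4_tkmp a ha, w4_tlmp a ha, w4_q a ha]
        simp [ha]
        rw [w3_0 a ha]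
        ring
end A

end

/-- Exact fourth moment formula on the unit sphere, together with the identity
`K + K_{4,4} + K_{2,2} + K_{2,2,2} + K_{2,2,2,2} = 0`. -/
theorem fourth_moment_unit_sphere
    (P : Measure Ω) [IsProbabilityMeasure P]
    (n : ℕ) (hn : 4 ≤ n) (Z : Fin n → Ω → ℝ)
    (hmeas : ∀ i, Measurable (Z i))
    (hsphere : ∀ ω, ∑ i, (Z i ω) ^ 2 = 1)
    (hPerm : ∀ (m : Fin n → ℕ) (σ : Equiv.Perm (Fin n)), (∑ i, m i) ≤ 4 →
      ∫ ω, ∏ i, Z i ω ^ (2 * m i) ∂P = ∫ ω, ∏ i, Z i ω ^ (2 * m (σ i)) ∂P)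
    (a : Fin n → ℝ) (ha : ∑ i, a i = 1) :
    ∀ K44 KK K22 K222 K2222 : ℝ,
      K44 = 3 * (Spow a 2) ^ 2 - 4 * Spow a 3 + (n : ℝ) * Spow a 4 →
      KK = 6 * (n : ℝ) * Spow a 2 - 4 * (n : ℝ) ^ 2 * Spow a 3 + (n : ℝ) ^ 3 * Spow a 4 - 3 →
      K22 = -12 * (n : ℝ) * Spow a 2 + 8 * (n : ℝ) ^ 2 * Spow a 3 -
          2 * (n : ℝ) ^ 3 * Spow a 4 + 6 →
      K222 = 8 * (n : ℝ) * Spow a 2 - 2 * (n : ℝ) * (Spow a 2) ^ 2 +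
          8 * (n : ℝ) * (1 - 2 * (n : ℝ)) / 3 * Spow a 3 +
          2 * (n : ℝ) ^ 2 * (2 * (n : ℝ) - 1) / 3 * Spow a 4 - 4 →
      K2222 = -2 * (n : ℝ) * Spow a 2 + (2 * (n : ℝ) - 3) * (Spow a 2) ^ 2 +
          4 * ((n : ℝ) ^ 2 - 2 * (n : ℝ) + 3) / 3 * Spow a 3 -
          (n : ℝ) * ((n : ℝ) ^ 2 - 2 * (n : ℝ) + 3) / 3 * Spow a 4 + 1 →
      (∫ ω, (∑ k, a k * ((n : ℝ) * (Z k ω) ^ 2 - 1)) ^ 4 ∂P =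
          K44 * (n : ℝ) ^ 4 * mom P Z [2, 2] + K22 * (n : ℝ) ^ 2 * mom P Z [1, 1] +
          K222 * (n : ℝ) ^ 3 * mom P Z [1, 1, 1] +
          K2222 * (n : ℝ) ^ 4 * mom P Z [1, 1, 1, 1] + KK) ∧
        KK + K44 + K22 + K222 + K2222 = 0 := by
  intro K44 KK K22 K222 K2222 h44 hKK h22 h222 h2222
  subst h44 hKK h22 h222 h2222
  refine ⟨?_, by ring⟩
  -- pointwise reduction of the integrand
  have hW : ∀ ω, (∑ k, a k * ((n : ℝ) * (Z k ω) ^ 2 - 1))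
      = (n : ℝ) * (∑ k, a k * Z k ω ^ 2) - 1 := by
    intro ω
    calc ∑ k, a k * ((n : ℝ) * (Z k ω) ^ 2 - 1)
        = ∑ k, ((n : ℝ) * (a k * Z k ω ^ 2) - a k) :=
          Finset.sum_congr rfl fun k _ => by ring
      _ = (∑ k, (n : ℝ) * (a k * Z k ω ^ 2)) - ∑ k, a k := Finset.sum_sub_distrib _ _
      _ = (n : ℝ) * (∑ k, a k * Z k ω ^ 2) - 1 := by rw [← Finset.mul_sum, ha]
  have hpt : ∀ ω, (∑ k, a k * ((n : ℝ) * (Z k ω) ^ 2 - 1)) ^ 4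
      = (n : ℝ) ^ 4 * (∑ k, a k * Z k ω ^ 2) ^ 4
        + (-4 * (n : ℝ) ^ 3) * (∑ k, a k * Z k ω ^ 2) ^ 3
        + (6 * (n : ℝ) ^ 2) * (∑ k, a k * Z k ω ^ 2) ^ 2
        + (-4 * (n : ℝ)) * (∑ k, a k * Z k ω ^ 2) + 1 := by
    intro ω
    rw [hW ω]
    ring
  -- integrability
  have iT1 : Integrable (fun ω => ∑ k, a k * Z k ω ^ 2) P :=
    integrable_finset_sum _ fun k _ => (intq1 P Z hmeas hsphere k).const_mul _
  have iT2 : Integrable (fun ω => (∑ k, a k * Z k ω ^ 2) ^ 2) P := by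
    rw [show (fun ω => (∑ k, a k * Z k ω ^ 2) ^ 2)
        = fun ω => ∑ k, ∑ l, (a k * Z k ω ^ 2) * (a l * Z l ω ^ 2) from
      funext fun ω => sum_pow_two' _]
    refine integrable_finset_sum _ fun k _ => integrable_finset_sum _ fun l _ => ?_
    rw [show (fun ω => (a k * Z k ω ^ 2) * (a l * Z l ω ^ 2))
        = fun ω => (a k * a l) * (Z k ω ^ 2 * Z l ω ^ 2) from funext fun ω => by ring]
    exact (intq2 P Z hmeas hsphere k l).const_mul _
  have iT3 : Integrable (fun ω => (∑ k, a k * Z k ω ^ 2) ^ 3) P := by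
    rw [show (fun ω => (∑ k, a k * Z k ω ^ 2) ^ 3)
        = fun ω => ∑ k, ∑ l, ∑ m, (a k * Z k ω ^ 2) * (a l * Z l ω ^ 2) * (a m * Z m ω ^ 2)
      from funext fun ω => sum_pow_three _]
    refine integrable_finset_sum _ fun k _ => integrable_finset_sum _ fun l _ =>
      integrable_finset_sum _ fun m _ => ?_
    rw [show (fun ω => (a k * Z k ω ^ 2) * (a l * Z l ω ^ 2) * (a m * Z m ω ^ 2))
        = fun ω => (a k * a l * a m) * (Z k ω ^ 2 * Z l ω ^ 2 * Z m ω ^ 2) from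
      funext fun ω => by ring]
    exact (intq3 P Z hmeas hsphere k l m).const_mul _
  have iT4 : Integrable (fun ω => (∑ k, a k * Z k ω ^ 2) ^ 4) P := by
    rw [show (fun ω => (∑ k, a k * Z k ω ^ 2) ^ 4)
        = fun ω => ∑ k, ∑ l, ∑ m, ∑ p, (a k * Z k ω ^ 2) * (a l * Z l ω ^ 2)
            * (a m * Z m ω ^ 2) * (a p * Z p ω ^ 2) from funext fun ω => sum_pow_four _]
    refine integrable_finset_sum _ fun k _ => integrable_finset_sum _ fun l _ =>
      integrable_finset_sum _ fun m _ => integrable_finset_sum _ fun p _ => ?_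
    rw [show (fun ω => (a k * Z k ω ^ 2) * (a l * Z l ω ^ 2) * (a m * Z m ω ^ 2)
          * (a p * Z p ω ^ 2))
        = fun ω => (a k * a l * a m * a p) * (Z k ω ^ 2 * Z l ω ^ 2 * Z m ω ^ 2 * Z p ω ^ 2)
      from funext fun ω => by ring]
    exact (intq4 P Z hmeas hsphere k l m p).const_mul _
  -- split the integral
  have hconst : ∫ _ω, (1 : ℝ) ∂P = 1 := by simp
  have J4 : Integrable (fun ω => (n : ℝ) ^ 4 * (∑ k, a k * Z k ω ^ 2) ^ 4) P :=
    iT4.const_mul _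
  have J3 : Integrable (fun ω => -4 * (n : ℝ) ^ 3 * (∑ k, a k * Z k ω ^ 2) ^ 3) P :=
    iT3.const_mul _
  have J2 : Integrable (fun ω => 6 * (n : ℝ) ^ 2 * (∑ k, a k * Z k ω ^ 2) ^ 2) P :=
    iT2.const_mul _
  have J1 : Integrable (fun ω => -4 * (n : ℝ) * (∑ k, a k * Z k ω ^ 2)) P :=
    iT1.const_mul _
  have J43 : Integrable (fun ω => (n : ℝ) ^ 4 * (∑ k, a k * Z k ω ^ 2) ^ 4
      + -4 * (n : ℝ) ^ 3 * (∑ k, a k * Z k ω ^ 2) ^ 3) P := J4.add J3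
  have J432 : Integrable (fun ω => (n : ℝ) ^ 4 * (∑ k, a k * Z k ω ^ 2) ^ 4
      + -4 * (n : ℝ) ^ 3 * (∑ k, a k * Z k ω ^ 2) ^ 3
      + 6 * (n : ℝ) ^ 2 * (∑ k, a k * Z k ω ^ 2) ^ 2) P := J43.add J2
  have J4321 : Integrable (fun ω => (n : ℝ) ^ 4 * (∑ k, a k * Z k ω ^ 2) ^ 4
      + -4 * (n : ℝ) ^ 3 * (∑ k, a k * Z k ω ^ 2) ^ 3
      + 6 * (n : ℝ) ^ 2 * (∑ k, a k * Z k ω ^ 2) ^ 2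
      + -4 * (n : ℝ) * (∑ k, a k * Z k ω ^ 2)) P := J432.add J1
  rw [integral_congr_ae (Filter.Eventually.of_forall hpt),
    integral_add J4321 (integrable_const 1),
    integral_add J432 J1,
    integral_add J43 J2,
    integral_add J4 J3,
    integral_const_mul, integral_const_mul, integral_const_mul, integral_const_mul, hconst]
  -- moment expansions
  have hE4 := E4gen P Z hmeas hsphere a ha _ _ _ _ _ (phi4 P Z hPerm)
  have hE3 := E3gen P Z hmeas hsphere a ha _ _ _ (phi3 P Z hPerm)
  have hE2 := E2gen P Z hmeas hsphere a ha _ _ (phi2 P Z hPerm)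
  have hE1 := E1gen P Z hmeas hsphere a ha _ (phi1 P Z hPerm)
  rw [hE4, hE3, hE2, hE1]
  -- relations from the sphere constraint
  have hR1 := R1 P Z hmeas hsphere hPerm hn
  have hR2 : Ifn P Z (patt [1]) = Ifn P Z (patt [2]) + ((n : ℝ) - 1) * Ifn P Z (patt [1, 1]) := by
    simpa using Rstep1 P Z hmeas hsphere hPerm hn 1 (by norm_num) (by norm_num)
  have hR3 : Ifn P Z (patt [2]) = Ifn P Z (patt [3]) + ((n : ℝ) - 1) * Ifn P Z (patt [2, 1]) := by
    simpa using Rstep1 P Z hmeas hsphere hPerm hn 2 (by norm_num) (by norm_num)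
  have hR5 : Ifn P Z (patt [3]) = Ifn P Z (patt [4]) + ((n : ℝ) - 1) * Ifn P Z (patt [3, 1]) := by
    simpa using Rstep1 P Z hmeas hsphere hPerm hn 3 (by norm_num) (by norm_num)
  have hR4 := R4 P Z hmeas hsphere hPerm hn
  have hR6 := R6 P Z hmeas hsphere hPerm hn
  have hR7 := R7 P Z hmeas hsphere hPerm hn
  -- rewrite moments and power sums
  rw [show mom P Z [2, 2] = Ifn P Z (patt [2, 2]) from rfl,
    show mom P Z [1, 1] = Ifn P Z (patt [1, 1]) from rfl,
    show mom P Z [1, 1, 1] = Ifn P Z (patt [1, 1, 1]) from rfl,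
    show mom P Z [1, 1, 1, 1] = Ifn P Z (patt [1, 1, 1, 1]) from rfl,
    show Spow a 2 = ∑ i, a i * a i from Finset.sum_congr rfl fun i _ => by ring,
    show Spow a 3 = ∑ i, a i * a i * a i from Finset.sum_congr rfl fun i _ => by ring,
    show Spow a 4 = ∑ i, a i * a i * a i * a i from Finset.sum_congr rfl fun i _ => by ring]
  set s2 := ∑ i, a i * a i with hs2
  set s3 := ∑ i, a i * a i * a i with hs3
  set s4 := ∑ i, a i * a i * a i * a i with hs4
  set nr := (n : ℝ) with hnr
  linear_combination
    (4 - 6 * nr * s2 + 4 * nr ^ 2 * s3 - nr ^ 3 * s4) * hR1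
    + (-6 * nr ^ 2 * s2 + 4 * nr ^ 3 * s3 - nr ^ 4 * s4) * hR2
    + (4 * nr ^ 3 * s3 - nr ^ 4 * s4) * hR3
    + (6 * nr ^ 3 * s2 - 4 * nr ^ 3 * s3 - 4 * nr ^ 4 * s3 + nr ^ 4 * s4 + nr ^ 5 * s4) * hR4
    + (-nr ^ 4 * s4) * hR5
    + (-4 * nr ^ 4 * s3 + 3 * nr ^ 4 * s4 + nr ^ 5 * s4) * hR6
    + (-2 * nr ^ 4 * s2 + 2 * nr ^ 4 * s2 ^ 2 + (4/3) * nr ^ 4 * s3 - 2 * nr ^ 4 * s4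
        + (4/3) * nr ^ 5 * s3 - (1/3) * nr ^ 5 * s4 - (1/3) * nr ^ 6 * s4) * hR7
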